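/- If X is a Gorenstein integral projective curve, then every rank 1 torsion-free sheaf I on X is reflexive: the natural map I → Hom(Hom(I, O_X), O_X) is an isomorphism. -/

import Mathlib

/-!
STATEMENT 8: If X is a Gorenstein integral projective curve, then every rank 1
torsion-free sheaf I on X is reflexive: I → Hom(Hom(I,O_X),O_X) is an
isomorphism (equivalently, D = -(-D) for every generalized divisor D).

Reflexivity is local, so we formalize the statement at a stalk: R is a local
ring of the curve, i.e. a 1-dimensional Noetherian local domain, F is its
fraction field (the function field of X); a rank 1 torsion-free sheaf is
locally a nonzero finitely generated R-submodule I of F, its dual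
Hom(I, O_X) is the submodule I⁻¹ = {f ∈ F : f·I ⊆ R}, and reflexivity of I is
I = (I⁻¹)⁻¹.  The Gorenstein condition on a 1-dimensional Noetherian local
domain is that the dualizing module is free, equivalently (Bass) that R has
Cohen–Macaulay type 1: the R-module m⁻¹/R is simple, i.e. R ⋖ m⁻¹ in the
lattice of R-submodules of F.
-/

variable (R : Type*) [CommRing R] (F : Type*) [Field F] [Algebra R F]

/-- The dual `{f ∈ F : f·I ⊆ R}` of a submodule `I ⊆ F = Frac R`,
i.e. the module of homomorphisms `I → O` as a subsheaf of `K`. -/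
def dualSub (I : Submodule R F) : Submodule R F where
  carrier := {f | ∀ x ∈ I, f * x ∈ LinearMap.range (Algebra.linearMap R F)}
  add_mem' := fun {a b} ha hb x hx => by simp only [Set.mem_setOf_eq] at *; simpa [add_mul] using add_mem (ha x hx) (hb x hx)
  zero_mem' := fun x hx => by simpa using Submodule.zero_mem _

  smul_mem' := fun c f hf x hx => by
    simpa [smul_mul_assoc] using Submodule.smul_mem _ c (hf x hx)

namespace GorRefl

open IsLocalRing Submodule

variable {R F}

local notation "O" => (LinearMap.range (Algebra.linearMap R F))

lemma mem_dualSub {I : Submodule R F} {f : F} :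
    f ∈ dualSub R F I ↔ ∀ x ∈ I, f * x ∈ O := Iff.rfl

lemma dualSub_anti {I J : Submodule R F} (h : I ≤ J) : dualSub R F J ≤ dualSub R F I :=
  fun f hf x hx => hf x (h hx)

lemma le_ddual {I : Submodule R F} : I ≤ dualSub R F (dualSub R F I) :=
  fun x hx f hf => by rw [mul_comm]; exact hf x hx

lemma algebraMap_mem_O (r : R) : (algebraMap R F) r ∈ O := ⟨r, rfl⟩

lemma dualSub_span_singleton {x : F} (hx : x ≠ 0) :
    dualSub R F (Submodule.span R {x}) = Submodule.span R {x⁻¹} := by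
  ext f
  constructor
  · intro h
    obtain ⟨r, hr⟩ := h x (Submodule.mem_span_singleton_self x)
    have hr' : (algebraMap R F) r = f * x := hr
    rw [Submodule.mem_span_singleton]
    refine ⟨r, ?_⟩
    rw [Algebra.smul_def, hr', mul_assoc, mul_inv_cancel₀ hx, mul_one]
  · intro hf y hy
    obtain ⟨r, rfl⟩ := Submodule.mem_span_singleton.mp hf
    obtain ⟨t, rfl⟩ := Submodule.mem_span_singleton.mp hy
    refine ⟨r * t, ?_⟩
    simp only [Algebra.linearMap_apply, Algebra.smul_def, map_mul]
    field_simp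

lemma exists_cover_elt [IsLocalRing R] {A B : Submodule R F} (h : A ⋖ B) :
    ∃ x, x ∈ B ∧ x ∉ A ∧ (∀ μ ∈ maximalIdeal R, μ • x ∈ A) ∧
      A ⊔ Submodule.span R {x} = B := by
  obtain ⟨x, hxB, hxA⟩ := SetLike.exists_of_lt h.lt
  have hsub : Submodule.span R {x} ≤ B := by
    rw [Submodule.span_le, Set.singleton_subset_iff]; exact hxB
  have hspan : A ⊔ Submodule.span R {x} = B := by
    rcases h.eq_or_eq le_sup_left (sup_le h.le hsub) with h1 | h1
    · exact absurd (h1 ▸ Submodule.mem_sup_right (Submodule.mem_span_singleton_self x)) hxA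
    · exact h1
  refine ⟨x, hxB, hxA, ?_, hspan⟩
  have hsmul : maximalIdeal R • Submodule.span R {x} ≤ A := by
    rcases h.eq_or_eq (le_sup_left : A ≤ A ⊔ maximalIdeal R • Submodule.span R {x})
      (sup_le h.le (le_trans (Submodule.smul_le_right) hsub)) with h1 | h1
    · conv_rhs => rw [← h1]
      exact le_sup_right
    · exfalso
      have hxmem : x ∈ A ⊔ maximalIdeal R • Submodule.span R {x} := h1 ▸ hxB
      rcases Submodule.mem_sup.mp hxmem with ⟨y, hy, z, hz, hxyz⟩
      rcases Submodule.mem_smul_span_singleton.mp hz with ⟨μ, hμ, rfl⟩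
      have hone : (1 - μ) • x = y := by
        rw [sub_smul, one_smul]
        exact sub_eq_of_eq_add hxyz.symm
      have hunit : IsUnit (1 - μ) := by
        rcases isUnit_or_isUnit_one_sub_self μ with h' | h'
        · exact absurd h' ((mem_maximalIdeal μ).mp hμ)
        · exact h'
      obtain ⟨v, hv⟩ := hunit.exists_left_inv
      apply hxA
      have : x = v • ((1 - μ) • x) := by rw [smul_smul, hv, one_smul]
      rw [this, hone]
      exact Submodule.smul_mem _ v hy
  intro μ hμ
  exact hsmul (Submodule.smul_mem_smul hμ (Submodule.mem_span_singleton_self x))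

lemma O_le_M0 [IsLocalRing R] :
    O ≤ dualSub R F (Submodule.map (Algebra.linearMap R F) (maximalIdeal R)) := by
  rintro z ⟨r, rfl⟩ w hw
  rcases Submodule.mem_map.mp hw with ⟨μ, hμ, rfl⟩
  exact ⟨r * μ, by simp [Algebra.linearMap_apply, map_mul]⟩

lemma dual_wcovby [IsLocalRing R]
    (hGor : O ⋖ dualSub R F (Submodule.map (Algebra.linearMap R F) (maximalIdeal R)))
    {A B : Submodule R F} (h : A ⋖ B) :
    dualSub R F B ⩿ dualSub R F A := by
  obtain ⟨x, hxB, hxA, hmx, hspan⟩ := exists_cover_elt h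
  set M0 := dualSub R F (Submodule.map (Algebra.linearMap R F) (maximalIdeal R)) with hM0
  have key : ∀ f ∈ dualSub R F A, f * x ∈ O → f ∈ dualSub R F B := by
    intro f hf hfx y hy
    rw [← hspan] at hy
    rcases Submodule.mem_sup.mp hy with ⟨a, ha, z, hz, rfl⟩
    rcases Submodule.mem_span_singleton.mp hz with ⟨t, rfl⟩
    rw [mul_add]
    refine Submodule.add_mem _ (hf a ha) ?_
    rw [mul_smul_comm]
    exact Submodule.smul_mem _ t hfx
  have keyM : ∀ f ∈ dualSub R F A, f * x ∈ M0 := by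
    intro f hf z hz
    rcases Submodule.mem_map.mp hz with ⟨μ, hμ, rfl⟩
    have heq : f * x * (Algebra.linearMap R F μ) = f * (μ • x) := by
      simp only [Algebra.linearMap_apply, Algebra.smul_def]
      ring
    rw [heq]
    exact hf _ (hmx μ hμ)
  refine ⟨dualSub_anti h.le, ?_⟩
  intro X h1 h2
  have hXle : X ≤ dualSub R F A := h2.le
  set φ : F →ₗ[R] F := LinearMap.mulRight R x with hφ
  have hmapX : Submodule.map φ X ≤ M0 := by
    rintro z ⟨f, hf, rfl⟩
    exact keyM f (hXle hf)
  rcases hGor.eq_or_eq (le_sup_right : O ≤ Submodule.map φ X ⊔ O)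
      (sup_le hmapX O_le_M0) with hY | hY
  · -- map φ X ⊔ O = O hence X ≤ dualSub B, contradicting h1
    have hle : X ≤ dualSub R F B := by
      intro f hf
      refine key f (hXle hf) ?_
      have : φ f ∈ Submodule.map φ X ⊔ O :=
        Submodule.mem_sup_left (Submodule.mem_map_of_mem hf)
      rwa [hY] at this
    exact h1.not_ge hle
  · -- map φ X ⊔ O = M0 hence dualSub A ≤ X, contradicting h2
    have hle : dualSub R F A ≤ X := by
      intro f hf
      have hfx : f * x ∈ Submodule.map φ X ⊔ O := by rw [hY]; exact keyM f hf
      rcases Submodule.mem_sup.mp hfx with ⟨z, hz, w, hw, heq⟩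
      rcases Submodule.mem_map.mp hz with ⟨g, hg, rfl⟩
      have hgx : φ g = g * x := rfl
      have hsub : (f - g) * x ∈ O := by
        rw [sub_mul]
        have : f * x - g * x = w := by rw [← heq, hgx]; ring
        rw [this]; exact hw
      have hfg : f - g ∈ dualSub R F A := Submodule.sub_mem _ hf (hXle hg)
      have hmem : f - g ∈ X := h1.le (key _ hfg hsub)
      have : (f - g) + g ∈ X := Submodule.add_mem _ hmem hg
      simpa using this
    exact h2.not_ge hle

lemma step_refine {A B : Submodule R F} (C : Submodule R F) (h : A ⋖ B) :
    (A ⊓ C = B ⊓ C ∧ (A ⊔ C) ⩿ (B ⊔ C)) ∨ (A ⊔ C = B ⊔ C ∧ (A ⊓ C) ⩿ (B ⊓ C)) := by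
  by_cases hc : B ⊓ C ≤ A
  · left
    refine ⟨le_antisymm (inf_le_inf_right C h.le) (le_inf hc inf_le_right), ?_⟩
    refine ⟨sup_le_sup_right h.le C, ?_⟩
    intro X h1 h2
    have hAX : A ≤ X := le_trans le_sup_left h1.le
    have hCX : C ≤ X := le_trans le_sup_right h1.le
    rcases h.eq_or_eq (le_inf hAX h.le : A ≤ X ⊓ B) inf_le_right with hy | hy
    · -- X ⊓ B = A, derive X = A ⊔ C
      have hXeq : X = C ⊔ B ⊓ X := by
        have hmod := sup_inf_assoc_of_le (x := C) B (z := X) hCX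
        rw [← hmod, sup_comm C B, inf_eq_right.mpr h2.le]
      rw [inf_comm B X, hy, sup_comm C A] at hXeq
      exact h1.ne' hXeq
    · -- X ⊓ B = B
      have hBX : B ≤ X := by rw [← hy]; exact inf_le_left
      exact h2.not_ge (sup_le hBX hCX)
  · right
    have hAB : A ⊔ (B ⊓ C) = B := by
      rcases h.eq_or_eq (le_sup_left : A ≤ A ⊔ (B ⊓ C))
        (sup_le h.le inf_le_left) with h1 | h1
      · exact absurd (le_trans le_sup_right h1.le) hc
      · exact h1
    constructor
    · apply le_antisymm (sup_le_sup_right h.le C)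
      conv_lhs => rw [← hAB]
      rw [sup_assoc]
      exact sup_le_sup_left (sup_le inf_le_right le_rfl) A
    · refine ⟨inf_le_inf_right C h.le, ?_⟩
      intro X h1 h2
      have hXB : X ≤ B := le_trans h2.le inf_le_left
      have hXC : X ≤ C := le_trans h2.le inf_le_right
      rcases h.eq_or_eq (le_sup_left : A ≤ A ⊔ X) (sup_le h.le hXB) with hy | hy
      · -- A ⊔ X = A means X ≤ A
        have : X ≤ A ⊓ C := le_inf (by rw [← hy]; exact le_sup_right) hXC
        exact h1.not_ge this
      · -- A ⊔ X = B
        have hmod := sup_inf_assoc_of_le (x := X) A (z := C) hXC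
        rw [sup_comm X A, hy] at hmod
        have : B ⊓ C = X := by
          rw [hmod]; exact sup_eq_left.mpr h1.le
        exact h2.ne this.symm

/-- A chain of covers from `A` to `B` of length `n`. -/
def Chn (A B : Submodule R F) (n : ℕ) : Prop :=
  ∃ s : RelSeries {(a, b) : Submodule R F × Submodule R F | a ⋖ b},
    s.head = A ∧ s.last = B ∧ s.length = n

lemma Chn.refl (A : Submodule R F) : Chn A A 0 :=
  ⟨RelSeries.singleton _ A, by simp, by simp, rfl⟩

lemma Chn.eq_of_zero {A B : Submodule R F} (h : Chn A B 0) : A = B := by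
  obtain ⟨s, hh, hl, hlen⟩ := h
  rw [← hh, ← hl]
  have hi : (0 : Fin (s.length + 1)) = Fin.last _ := by
    ext; simp [hlen]
  show s 0 = s (Fin.last _)
  rw [hi]

lemma Chn.le {A B : Submodule R F} {n : ℕ} (h : Chn A B n) : A ≤ B := by
  obtain ⟨s, hh, hl, -⟩ := h
  rw [← hh, ← hl]
  have hmono : Monotone s := Fin.monotone_iff_le_succ.mpr fun i => (show _ ⋖ _ from s.step i).le
  exact hmono (Fin.zero_le _)

lemma Chn.trans {A B C : Submodule R F} {n m : ℕ}
    (h1 : Chn A B n) (h2 : Chn B C m) : Chn A C (n + m) := by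
  obtain ⟨s, hsh, hsl, hslen⟩ := h1
  obtain ⟨t, hth, htl, htlen⟩ := h2
  exact ⟨s.smash t (by rw [hsl, hth]), by simp [hsh], by simp [htl],
    by simp [hslen, htlen]⟩

lemma chn_dual [IsLocalRing R]
    (hGor : O ⋖ dualSub R F (Submodule.map (Algebra.linearMap R F) (maximalIdeal R))) :
    ∀ n, ∀ {A B : Submodule R F}, Chn A B n →
      ∃ m, m ≤ n ∧ Chn (dualSub R F B) (dualSub R F A) m := by
  intro n
  induction n with
  | zero =>
    intro A B h
    rw [h.eq_of_zero]
    exact ⟨0, le_rfl, Chn.refl _⟩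
  | succ n ih =>
    rintro A B ⟨s, hh, hl, hlen⟩
    have hne : s.length ≠ 0 := by omega
    have hstep : s.eraseLast.last ⋖ B := by
      rw [← hl]; exact s.eraseLast_last_rel_last hne
    obtain ⟨m, hm, hc⟩ := ih (A := A) (B := s.eraseLast.last)
      ⟨s.eraseLast, by simp [hh], rfl, by simp [hlen]⟩
    rcases (dual_wcovby hGor hstep).covBy_or_eq with hcov | heq
    · obtain ⟨t, hth, htl, htlen⟩ := hc
      exact ⟨m + 1, by omega,
        ⟨t.cons (dualSub R F B) (by rw [hth]; exact hcov), by simp, by simp [htl],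
          by simp [htlen]⟩⟩
    · exact ⟨m, by omega, by rwa [← heq] at hc⟩

lemma chn_refine :
    ∀ n, ∀ {A B : Submodule R F} (C : Submodule R F), Chn A B n →
      ∃ r t, r + t ≤ n ∧ Chn (A ⊓ C) (B ⊓ C) r ∧ Chn (A ⊔ C) (B ⊔ C) t := by
  intro n
  induction n with
  | zero =>
    intro A B C h
    rw [h.eq_of_zero]
    exact ⟨0, 0, by omega, Chn.refl _, Chn.refl _⟩
  | succ n ih =>
    rintro A B C ⟨s, hh, hl, hlen⟩
    have hne : s.length ≠ 0 := by omega
    have hstep : s.eraseLast.last ⋖ B := by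
      rw [← hl]; exact s.eraseLast_last_rel_last hne
    obtain ⟨r, t, hrt, hcr, hct⟩ := ih (A := A) (B := s.eraseLast.last) C
      ⟨s.eraseLast, by simp [hh], rfl, by simp [hlen]⟩
    rcases step_refine C hstep with ⟨heq, hw⟩ | ⟨heq, hw⟩
    · rcases hw.covBy_or_eq with hcov | heq2
      · obtain ⟨u, huh, hul, hulen⟩ := hct
        exact ⟨r, t + 1, by omega, by rwa [heq] at hcr,
          ⟨u.snoc (B ⊔ C) (by rw [hul]; exact hcov), by simp [huh], by simp,
            by simp [hulen]⟩⟩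
      · exact ⟨r, t, by omega, by rwa [heq] at hcr, by rwa [heq2] at hct⟩
    · rcases hw.covBy_or_eq with hcov | heq2
      · obtain ⟨u, huh, hul, hulen⟩ := hcr
        exact ⟨r + 1, t, by omega,
          ⟨u.snoc (B ⊓ C) (by rw [hul]; exact hcov), by simp [huh], by simp,
            by simp [hulen]⟩, by rwa [heq] at hct⟩
      · exact ⟨r, t, by omega, by rwa [heq2] at hcr, by rwa [heq] at hct⟩

lemma chn_unique {A B : Submodule R F} {n m : ℕ}
    (h1 : Chn A B n) (h2 : Chn A B m) : n = m := by
  obtain ⟨s, hsh, hsl, hslen⟩ := h1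
  obtain ⟨t, hth, htl, htlen⟩ := h2
  obtain ⟨e, -⟩ := CompositionSeries.jordan_holder (X := Submodule R F) s t
    (by rw [hsh, hth]) (by rw [hsl, htl])
  rw [← hslen, ← htlen]
  simpa using Fintype.card_congr e

section Artinian

variable [IsLocalRing R]

lemma isArtinian_of_smul_top_eq_bot {M : Type*} [AddCommGroup M] [Module R M]
    [IsNoetherian R M] (h : maximalIdeal R • (⊤ : Submodule R M) = ⊥) :
    IsArtinian R M := by
  haveI hss : IsSemisimpleModule R M := by
    apply IsSemisimpleModule.of_sSup_simples_eq_top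
    rw [eq_top_iff]
    intro x _
    by_cases hx : x = 0
    · simp [hx]
    · have hatom : IsAtom (Submodule.span R {x}) := by
        constructor
        · simpa using hx
        · intro Y hY
          by_contra hYne
          obtain ⟨y, hyY, hy0⟩ := Submodule.exists_mem_ne_zero_of_ne_bot hYne
          obtain ⟨r, rfl⟩ := Submodule.mem_span_singleton.mp (hY.le hyY)
          by_cases hr : r ∈ maximalIdeal R
          · have hmem : r • x ∈ maximalIdeal R • (⊤ : Submodule R M) :=
              Submodule.smul_mem_smul hr Submodule.mem_top
            rw [h] at hmem
            exact hy0 (by simpa using hmem)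
          · have hu : IsUnit r := by
              by_contra hnu
              exact hr ((mem_maximalIdeal r).mpr hnu)
            obtain ⟨v, hv⟩ := hu.exists_left_inv
            have hxY : x ∈ Y := by
              have hvy : v • (r • x) ∈ Y := Submodule.smul_mem _ v hyY
              rwa [smul_smul, hv, one_smul] at hvy
            exact hY.not_ge ((Submodule.span_singleton_le_iff_mem x Y).mpr hxY)
      have hsimp : Submodule.span R {x} ∈ {m : Submodule R M | IsSimpleModule R m} :=
        isSimpleModule_iff_isAtom.mpr hatom
      exact le_sSup hsimp (Submodule.mem_span_singleton_self x)
  have htfae : IsNoetherian R M ↔ IsArtinian R M := IsSemisimpleModule.finite_tfae.out 1 2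
  exact htfae.mp inferInstance

lemma isArtinian_of_pow_smul_top_eq_bot (n : ℕ) {M : Type*} [AddCommGroup M] [Module R M]
    [IsNoetherian R M] (h : maximalIdeal R ^ n • (⊤ : Submodule R M) = ⊥) :
    IsArtinian R M := by
  induction n generalizing M with
  | zero =>
    rw [pow_zero, Ideal.one_eq_top, Submodule.top_smul] at h
    haveI : Subsingleton M := by
      rw [← Submodule.subsingleton_iff R]
      exact subsingleton_of_bot_eq_top h.symm
    exact inferInstance
  | succ n ih =>
    have hle : maximalIdeal R ^ n • (maximalIdeal R • (⊤ : Submodule R M)) ≤ ⊥ := by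
      rw [← Submodule.smul_assoc, Ideal.smul_eq_mul, ← pow_succ, h]
    haveI : IsArtinian R ↥(maximalIdeal R • (⊤ : Submodule R M)) := by
      have hbot : maximalIdeal R ^ n •
          (⊤ : Submodule R ↥(maximalIdeal R • (⊤ : Submodule R M))) = ⊥ := ?_
      · exact ih hbot
      have hmap : Submodule.map (maximalIdeal R • (⊤ : Submodule R M)).subtype
          (maximalIdeal R ^ n • (⊤ : Submodule R ↥(maximalIdeal R • (⊤ : Submodule R M)))) =
          maximalIdeal R ^ n • (maximalIdeal R • (⊤ : Submodule R M)) := by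
        rw [Submodule.map_smul'', Submodule.map_top, Submodule.range_subtype]
      rw [eq_bot_iff]
      intro z hz
      have hz' : (maximalIdeal R • (⊤ : Submodule R M)).subtype z ∈ (⊥ : Submodule R M) := by
        apply hle
        rw [← hmap]
        exact Submodule.mem_map_of_mem hz
      simp only [Submodule.mem_bot] at hz' ⊢
      exact Subtype.ext hz'
    haveI : IsArtinian R (M ⧸ (maximalIdeal R • (⊤ : Submodule R M))) := by
      apply isArtinian_of_smul_top_eq_bot
      have hmap : Submodule.map (maximalIdeal R • (⊤ : Submodule R M)).mkQ
          (maximalIdeal R • (⊤ : Submodule R M)) =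
          maximalIdeal R • (⊤ : Submodule R (M ⧸ (maximalIdeal R • (⊤ : Submodule R M)))) := by
        rw [Submodule.map_smul'', Submodule.map_top, Submodule.range_mkQ]
      rw [← hmap, eq_bot_iff]
      rintro z ⟨y, hy, rfl⟩
      simp only [Submodule.mem_bot, Submodule.mkQ_apply, Submodule.Quotient.mk_eq_zero]
      exact hy
    exact isArtinian_of_range_eq_ker (maximalIdeal R • (⊤ : Submodule R M)).subtype
      (maximalIdeal R • (⊤ : Submodule R M)).mkQ
      (by rw [Submodule.range_subtype, Submodule.ker_mkQ])

end Artinian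

section Dimension

lemma prime_eq_max [IsDomain R] [IsLocalRing R] (hdim : ringKrullDim R = 1)
    {a : R} (ha : a ≠ 0) {P : Ideal R} (hP : P.IsPrime) (haP : a ∈ P) :
    P = maximalIdeal R := by
  have hPne : P ≠ ⊤ := hP.ne_top
  have hPm : P ≤ maximalIdeal R := le_maximalIdeal hPne
  by_contra hne
  have hlt : P < maximalIdeal R := lt_of_le_of_ne hPm hne
  have hbot : (⊥ : Ideal R) < P :=
    bot_lt_iff_ne_bot.mpr (fun h => ha (by rwa [h, Ideal.mem_bot] at haP))
  let p0 : PrimeSpectrum R := ⟨⊥, Ideal.bot_prime⟩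
  let p1 : PrimeSpectrum R := ⟨P, hP⟩
  let p2 : PrimeSpectrum R := ⟨maximalIdeal R, (maximalIdeal.isMaximal R).isPrime⟩
  have h01 : p0 < p1 := hbot
  have h12 : p1 < p2 := hlt
  let c : LTSeries (PrimeSpectrum R) :=
    ((RelSeries.singleton _ p0).snoc p1 h01).snoc p2 (by exact h12)
  have hlen : c.length = 2 := rfl
  have hle := Order.LTSeries.length_le_krullDim c
  rw [hlen] at hle
  have : ringKrullDim R = Order.krullDim (PrimeSpectrum R) := rfl
  rw [← this, hdim] at hle
  norm_num at hle

lemma isArtinian_quot [IsDomain R] [IsLocalRing R] [IsNoetherianRing R]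
    (hdim : ringKrullDim R = 1) {a : R} (ha : a ≠ 0) :
    IsArtinian R (R ⧸ Ideal.span {a}) := by
  obtain ⟨n, hn⟩ : ∃ n, maximalIdeal R ^ n ≤ Ideal.span {a} := by
    by_cases htop : Ideal.span {a} = ⊤
    · exact ⟨0, by rw [htop]; exact le_top⟩
    · have hrad : (Ideal.span {a}).radical = maximalIdeal R := by
        rw [Ideal.radical_eq_sInf]
        apply le_antisymm
        · exact sInf_le ⟨le_maximalIdeal htop, (maximalIdeal.isMaximal R).isPrime⟩
        · apply le_sInf
          rintro J ⟨hJle, hJprime⟩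
          exact (prime_eq_max hdim ha hJprime (hJle (Ideal.mem_span_singleton_self a))).ge
      obtain ⟨n, hn⟩ := Ideal.exists_radical_pow_le_of_fg (Ideal.span {a})
        (IsNoetherian.noetherian _)
      exact ⟨n, by rwa [hrad] at hn⟩
  apply isArtinian_of_pow_smul_top_eq_bot n
  have hmap : Submodule.map (Ideal.span {a}).mkQ (maximalIdeal R ^ n • (⊤ : Submodule R R)) =
      maximalIdeal R ^ n • (⊤ : Submodule R (R ⧸ Ideal.span {a})) := by
    rw [Submodule.map_smul'', Submodule.map_top, Submodule.range_mkQ]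
  rw [← hmap, eq_bot_iff]
  rintro z ⟨y, hy, rfl⟩
  simp only [Submodule.mem_bot, Submodule.mkQ_apply, Submodule.Quotient.mk_eq_zero]
  apply hn
  have hst : maximalIdeal R ^ n • (⊤ : Submodule R R) = maximalIdeal R ^ n := by
    rw [← Ideal.one_eq_top, Ideal.smul_eq_mul, mul_one]
  rwa [hst] at hy

end Dimension

section Transfer

lemma covby_map_psi {ψ : R →ₗ[R] F} (hinj : Function.Injective ψ) {A B : Ideal R}
    (h : A ⋖ B) : Submodule.map ψ A ⋖ Submodule.map ψ B := by
  constructor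
  · refine lt_of_le_of_ne (Submodule.map_mono h.lt.le) fun he => ?_
    exact h.lt.ne (Submodule.map_injective_of_injective hinj he)
  · intro C h1 h2
    have hCr : C ≤ LinearMap.range ψ := by
      refine le_trans h2.le ?_
      rw [← Submodule.map_top]
      exact Submodule.map_mono le_top
    have hmc : Submodule.map ψ (Submodule.comap ψ C) = C := by
      rw [Submodule.map_comap_eq, inf_eq_right.mpr hCr]
    refine h.2 (c := Submodule.comap ψ C) ?_ ?_
    · refine lt_of_le_of_ne (Submodule.map_le_iff_le_comap.mp h1.le) fun he => ?_
      rw [← he] at hmc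
      exact h1.ne hmc
    · refine lt_of_le_of_ne ?_ fun he => ?_
      · have : C ≤ Submodule.map ψ B := h2.le
        have h3 : Submodule.comap ψ C ≤ Submodule.comap ψ (Submodule.map ψ B) :=
          Submodule.comap_mono this
        rwa [Submodule.comap_map_eq_of_injective hinj] at h3
      · rw [he] at hmc
        exact h2.ne hmc.symm

lemma covby_comap_mkQ {J : Ideal R} {A B : Submodule R (R ⧸ J)} (h : A ⋖ B) :
    Submodule.comap J.mkQ A ⋖ Submodule.comap J.mkQ B := by
  have hsurj : Function.Surjective J.mkQ := Submodule.mkQ_surjective J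
  have hmc : ∀ X : Submodule R (R ⧸ J),
      Submodule.map J.mkQ (Submodule.comap J.mkQ X) = X := fun X =>
    Submodule.map_comap_eq_of_surjective (f := J.mkQ) hsurj X
  constructor
  · refine lt_of_le_of_ne (Submodule.comap_mono h.lt.le) fun he => ?_
    apply h.lt.ne
    rw [← hmc A, ← hmc B, he]
  · intro C h1 h2
    refine h.2 (c := Submodule.map J.mkQ C) ?_ ?_
    · refine lt_of_le_of_ne ?_ fun he => ?_
      · conv_lhs => rw [← hmc A]
        exact Submodule.map_mono h1.le
      · have hC : C ≤ Submodule.comap J.mkQ (Submodule.map J.mkQ C) :=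
          Submodule.le_comap_map _ _
        rw [← he] at hC
        exact h1.not_ge hC
    · refine lt_of_le_of_ne ?_ fun he => ?_
      · have : Submodule.map J.mkQ C ≤ Submodule.map J.mkQ (Submodule.comap J.mkQ B) :=
          Submodule.map_mono h2.le
        rwa [hmc B] at this
      · have hker : LinearMap.ker J.mkQ ≤ C := by
          refine le_trans ?_ h1.le
          intro x hx
          rw [LinearMap.mem_ker] at hx
          rw [Submodule.mem_comap, hx]
          exact A.zero_mem
        have hcm : Submodule.comap J.mkQ B = C := by
          rw [← he, Submodule.comap_map_eq, sup_eq_left.mpr hker]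
        rw [hcm] at h2
        exact lt_irrefl C h2

lemma exists_chn_ideal [IsDomain R] [IsLocalRing R] [IsNoetherianRing R]
    (hdim : ringKrullDim R = 1) {a : R} (ha : a ≠ 0)
    {ψ : R →ₗ[R] F} (hinj : Function.Injective ψ) :
    ∃ n, Chn (Submodule.map ψ (Ideal.span {a} : Ideal R)) (LinearMap.range ψ) n := by
  haveI := isArtinian_quot hdim ha
  obtain ⟨s, hsh, hsl⟩ :=
    exists_compositionSeries_of_isNoetherian_isArtinian R (R ⧸ Ideal.span {a})
  let f : SetRel.Hom {(x, y) : Submodule R (R ⧸ Ideal.span {a}) × _ |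
        JordanHolderLattice.IsMaximal x y}
      {(x, y) : Submodule R F × Submodule R F | x ⋖ y} :=
    ⟨fun X => Submodule.map ψ (Submodule.comap (Ideal.span {a}).mkQ X),
      fun h => covby_map_psi hinj (covby_comap_mkQ h)⟩
  let t := RelSeries.map s f
  refine ⟨t.length, t, ?_, ?_, rfl⟩
  · rw [RelSeries.head_map]
    show Submodule.map ψ (Submodule.comap (Ideal.span {a}).mkQ s.head) = _
    rw [hsh, Submodule.comap_bot, Submodule.ker_mkQ]
  · rw [RelSeries.last_map]
    show Submodule.map ψ (Submodule.comap (Ideal.span {a}).mkQ s.last) = _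
    rw [hsl, Submodule.comap_top, Submodule.map_top]

end Transfer

lemma O_eq_span_one : (LinearMap.range (Algebra.linearMap R F) : Submodule R F) =
    Submodule.span R {1} := by
  ext z
  constructor
  · rintro ⟨r, rfl⟩
    exact Submodule.mem_span_singleton.mpr
      ⟨r, by simp [Algebra.linearMap_apply, Algebra.algebraMap_eq_smul_one]⟩
  · intro hz
    obtain ⟨r, rfl⟩ := Submodule.mem_span_singleton.mp hz
    exact ⟨r, by simp [Algebra.linearMap_apply, Algebra.algebraMap_eq_smul_one]⟩

end GorRefl

theorem gorenstein_rank_one_torsion_free_reflexive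
    [IsDomain R] [IsNoetherianRing R] [IsLocalRing R]
    [IsFractionRing R F]
    (hdim : ringKrullDim R = 1)
    -- Gorenstein: R is of Cohen–Macaulay type 1, i.e. m⁻¹/R is a simple module:
    (hGor : (LinearMap.range (Algebra.linearMap R F)) ⋖
      dualSub R F (Submodule.map (Algebra.linearMap R F) (IsLocalRing.maximalIdeal R)))
    (I : Submodule R F) (hI : I ≠ ⊥) (hfg : I.FG) :
    dualSub R F (dualSub R F I) = I := by
  classical
  open GorRefl Submodule in
  -- Step 1: a nonzero element α = algebraMap p of I
  obtain ⟨x, hxI, hx0⟩ := Submodule.exists_mem_ne_zero_of_ne_bot hI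
  obtain ⟨p, q, hq, hx⟩ := IsFractionRing.div_surjective (A := R) x
  have hp0 : p ≠ 0 := by
    intro h
    apply hx0
    rw [← hx, h, map_zero, zero_div]
  have hq0 : algebraMap R F q ≠ 0 :=
    IsFractionRing.to_map_ne_zero_of_mem_nonZeroDivisors (K := F) hq
  have hα0 : algebraMap R F p ≠ 0 := fun h =>
    hp0 (IsFractionRing.injective R F (by rw [h, map_zero]))
  have hαI : algebraMap R F p ∈ I := by
    have hqx : algebraMap R F q * x = algebraMap R F p := by
      rw [← hx]; field_simp
    have hsm : q • x ∈ I := I.smul_mem q hxI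
    rwa [Algebra.smul_def, hqx] at hsm
  -- Step 2: common denominator σ
  obtain ⟨T, hT⟩ := hfg
  obtain ⟨b, hb⟩ := IsLocalization.exist_integer_multiples (nonZeroDivisors R) T id
  have hb0 : (b : R) ≠ 0 := nonZeroDivisors.coe_ne_zero b
  have hσ0 : algebraMap R F (b : R) ≠ 0 :=
    IsFractionRing.to_map_ne_zero_of_mem_nonZeroDivisors (K := F) b.2
  have hIle : I ≤ Submodule.span R {(algebraMap R F (b : R))⁻¹} := by
    rw [← hT, Submodule.span_le]
    intro y hyT
    obtain ⟨c, hc⟩ := hb y hyT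
    refine Submodule.mem_span_singleton.mpr ⟨c, ?_⟩
    have hc' : algebraMap R F c = algebraMap R F (b : R) * y := by
      rw [hc]; simp [Algebra.smul_def]
    rw [Algebra.smul_def, hc']
    field_simp
  -- Step 3: master chain from span {α} to span {σ⁻¹}
  have hinj1 : Function.Injective (Algebra.linearMap R F) := IsFractionRing.injective R F
  obtain ⟨n1, hc1⟩ := exists_chn_ideal (F := F) hdim hp0 hinj1
  have hmap1 : Submodule.map (Algebra.linearMap R F) (Ideal.span {p}) =
      Submodule.span R {algebraMap R F p} := by
    rw [← Ideal.submodule_span_eq, Submodule.map_span, Set.image_singleton]; rfl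
  rw [hmap1] at hc1
  -- second piece
  set σ := algebraMap R F (b : R) with hσ
  set ψ₂ : R →ₗ[R] F := (LinearMap.mulLeft R σ⁻¹).comp (Algebra.linearMap R F) with hψ₂
  have hinj2 : Function.Injective ψ₂ := by
    intro u v huv
    apply hinj1
    have huv' : σ⁻¹ * (Algebra.linearMap R F u) = σ⁻¹ * (Algebra.linearMap R F v) := huv
    exact mul_left_cancel₀ (inv_ne_zero hσ0) huv'
  obtain ⟨n2, hc2⟩ := exists_chn_ideal (F := F) hdim hb0 hinj2
  have hmap2 : Submodule.map ψ₂ (Ideal.span {(b : R)}) =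
      LinearMap.range (Algebra.linearMap R F) := by
    rw [← Ideal.submodule_span_eq, Submodule.map_span, Set.image_singleton, O_eq_span_one]
    have hψb : ψ₂ (b : R) = 1 := by
      show σ⁻¹ * algebraMap R F (b : R) = 1
      rw [← hσ, inv_mul_cancel₀ hσ0]
    rw [hψb]
  have hrange2 : LinearMap.range ψ₂ = Submodule.span R {σ⁻¹} := by
    rw [hψ₂, LinearMap.range_comp]
    show Submodule.map (LinearMap.mulLeft R σ⁻¹) (LinearMap.range (Algebra.linearMap R F)) = _
    rw [O_eq_span_one, Submodule.map_span, Set.image_singleton]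
    have h1 : (LinearMap.mulLeft R σ⁻¹) (1 : F) = σ⁻¹ := by simp
    rw [h1]
  rw [hmap2, hrange2] at hc2
  have hmaster : Chn (Submodule.span R {algebraMap R F p}) (Submodule.span R {σ⁻¹})
      (n1 + n2) := hc1.trans hc2
  -- Step 4: refine through I to get a chain from span{α} to I
  obtain ⟨r0, t0, hrt0, hcr0, -⟩ := chn_refine (n1 + n2) I hmaster
  rw [inf_eq_left.mpr (Submodule.span_le.mpr (by simpa using hαI)),
    inf_eq_right.mpr hIle] at hcr0
  -- hcr0 : Chn (span {α}) I r0
  -- Step 5: dualize twice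
  obtain ⟨q1, hq1, hd1⟩ := chn_dual hGor r0 hcr0
  obtain ⟨q2, hq2, hd2⟩ := chn_dual hGor q1 hd1
  rw [dualSub_span_singleton hα0, dualSub_span_singleton (inv_ne_zero hα0), inv_inv] at hd2
  -- hd2 : Chn (span {α}) (dualSub (dualSub I)) q2
  -- Step 6: refine through I
  obtain ⟨r1, t1, hrt1, hcr1, hct1⟩ := chn_refine q2 I hd2
  rw [inf_eq_left.mpr (Submodule.span_le.mpr (by simpa using hαI)),
    inf_eq_right.mpr (le_ddual (I := I))] at hcr1
  rw [sup_eq_right.mpr (Submodule.span_le.mpr (by simpa using hαI)),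
    sup_eq_left.mpr (le_ddual (I := I))] at hct1
  -- Step 7: conclude
  have hr1 : r1 = r0 := chn_unique hcr1 hcr0
  have ht1 : t1 = 0 := by omega
  rw [ht1] at hct1
  exact hct1.eq_of_zero.symm
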